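/- arXiv:math/0701781 — 2 statements merged into one kernel-verified Lean document; each statement's English description precedes it below -/
import Mathlib

section
/- Let x₁,…,xₙ be i.i.d. uniform on [0,1]^d, Γ ⊂ ℤ^d with |Γ| = D ≥ 2, and U the associated random Fourier matrix with entries exp(2πi k·x_t). Then for every ε > 0, P(‖n⁻¹U*U − I‖ ≥ ε) ≤ 4D(D−1) exp(−nε²/(2((D−1)² + √2 (D−1)ε/3))). -/
open MeasureTheory ProbabilityTheory Matrix
open scoped Real Matrix.Norms.L2Operator Nat

noncomputable section FourierAux
open Real Set

variable {d : ℕ}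

abbrev nu (d : ℕ) : Measure (Fin d → ℝ) :=
  (volume : Measure (Fin d → ℝ)).restrict (Set.Icc 0 1)

instance : IsProbabilityMeasure (nu d) := by
  constructor
  rw [Measure.restrict_apply_univ, Real.volume_Icc_pi]
  simp


lemma exp_sub_eq_tsum (x : ℝ) :
    Real.exp x - x - 1 = ∑' k : ℕ, x ^ (k + 2) / ((k + 2)! : ℝ) := by
  have hs := Real.summable_pow_div_factorial x
  have h0 : Real.exp x = ∑' n : ℕ, x ^ n / n ! := by
    rw [Real.exp_eq_exp_ℝ, NormedSpace.exp_eq_tsum_div]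
  rw [h0, Summable.tsum_eq_zero_add hs, Summable.tsum_eq_zero_add ((summable_nat_add_iff 1).2 hs)]
  simp [Nat.factorial]
  ring

lemma exp_mul_le (l y : ℝ) (hl : 0 ≤ l) (hy : |y| ≤ 1) :
    Real.exp (l * y) ≤ 1 + l * y + y ^ 2 * (Real.exp l - l - 1) := by
  have hs := Real.summable_pow_div_factorial l
  have hsly := Real.summable_pow_div_factorial (l * y)
  have h1 := exp_sub_eq_tsum (l * y)
  have h2 := exp_sub_eq_tsum l
  have hterm : ∀ k : ℕ, (l * y) ^ (k + 2) / ((k + 2)! : ℝ) ≤ y ^ 2 * (l ^ (k + 2) / ((k + 2)! : ℝ)) := by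
    intro k
    rw [mul_div_assoc']
    apply div_le_div_of_nonneg_right ?_ (by positivity)
    calc (l * y) ^ (k + 2) ≤ |(l * y) ^ (k + 2)| := le_abs_self _
      _ = l ^ (k + 2) * |y| ^ (k + 2) := by
          rw [abs_pow, abs_mul, abs_of_nonneg hl, mul_pow]
      _ ≤ l ^ (k + 2) * y ^ 2 := by
          apply mul_le_mul_of_nonneg_left ?_ (by positivity)
          calc |y| ^ (k + 2) ≤ |y| ^ 2 := pow_le_pow_of_le_one (abs_nonneg y) hy (by omega)
            _ = y ^ 2 := sq_abs y
      _ = y ^ 2 * l ^ (k + 2) := by ring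
  have hsum1 : Summable (fun k : ℕ => (l * y) ^ (k + 2) / ((k + 2)! : ℝ)) :=
    ((summable_nat_add_iff 2).2 hsly)
  have hsum2 : Summable (fun k : ℕ => y ^ 2 * (l ^ (k + 2) / ((k + 2)! : ℝ))) :=
    ((summable_nat_add_iff 2).2 hs).mul_left _
  have := Summable.tsum_le_tsum hterm hsum1 hsum2
  rw [tsum_mul_left] at this
  nlinarith [this, h1, h2]

lemma exp_sub_le_quad {l : ℝ} (hl : 0 ≤ l) (hl3 : l < 3) :
    Real.exp l - l - 1 ≤ l ^ 2 / (2 * (1 - l / 3)) := by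
  have hs := Real.summable_pow_div_factorial l
  rw [exp_sub_eq_tsum l]
  have hr0 : (0:ℝ) ≤ l / 3 := by linarith
  have hr1 : l / 3 < 1 := by linarith
  have hterm : ∀ k : ℕ, l ^ (k + 2) / ((k + 2)! : ℝ) ≤ l ^ 2 / 2 * (l / 3) ^ k := by
    intro k
    have hfac : (2 : ℝ) * 3 ^ k ≤ ((k + 2)! : ℝ) := by
      induction k with
      | zero => norm_num [Nat.factorial]
      | succ m ih =>
        have : ((m + 3)! : ℝ) = (m + 3) * ((m + 2)! : ℝ) := by
          push_cast [Nat.factorial_succ]; ring_nf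
        calc (2:ℝ) * 3 ^ (m + 1) = 3 * (2 * 3 ^ m) := by ring
          _ ≤ 3 * ((m + 2)! : ℝ) := by nlinarith
          _ ≤ (m + 3) * ((m + 2)! : ℝ) := by
              have : (0:ℝ) ≤ ((m + 2)! : ℝ) := by positivity
              nlinarith
          _ = ((m + 3)! : ℝ) := this.symm
    have h3 : l ^ 2 / 2 * (l / 3) ^ k = l ^ (k + 2) / (2 * 3 ^ k) := by
      rw [div_pow]; ring
    rw [h3]
    apply div_le_div_of_nonneg_left (by positivity) (by positivity) hfac
  calc ∑' k : ℕ, l ^ (k + 2) / ((k + 2)! : ℝ)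
      ≤ ∑' k : ℕ, l ^ 2 / 2 * (l / 3) ^ k := by
        apply Summable.tsum_le_tsum hterm ((summable_nat_add_iff 2).2 hs)
        exact (summable_geometric_of_lt_one hr0 hr1).mul_left _
    _ = l ^ 2 / 2 * (1 - l / 3)⁻¹ := by
        rw [tsum_mul_left, tsum_geometric_of_lt_one hr0 hr1]
    _ = l ^ 2 / (2 * (1 - l / 3)) := by
        field_simp

lemma my_mgf_le {Ω : Type*} [MeasurableSpace Ω] (μ : Measure Ω) [IsProbabilityMeasure μ]
    {Y : Ω → ℝ} (hYm : Measurable Y) (hYb : ∀ ω, |Y ω| ≤ 1)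
    (hmean : ∫ ω, Y ω ∂μ = 0) (hvar : ∫ ω, Y ω ^ 2 ∂μ ≤ 1 / 2)
    {l : ℝ} (hl : 0 ≤ l) :
    mgf Y μ l ≤ Real.exp ((Real.exp l - l - 1) / 2) := by
  set C := Real.exp l - l - 1 with hC
  have hC0 : 0 ≤ C := by
    have := Real.add_one_le_exp l; simp only [hC]; linarith
  have hYint : Integrable Y μ :=
    (integrable_const (1:ℝ)).mono' hYm.aestronglyMeasurable
      (Filter.Eventually.of_forall fun ω => by simpa using hYb ω)
  have hY2int : Integrable (fun ω => Y ω ^ 2) μ :=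
    (integrable_const (1:ℝ)).mono' (hYm.pow_const 2).aestronglyMeasurable
      (Filter.Eventually.of_forall fun ω => by
        have := hYb ω
        rw [Real.norm_eq_abs, abs_pow]
        nlinarith [abs_nonneg (Y ω)])
  have hexpint : Integrable (fun ω => Real.exp (l * Y ω)) μ :=
    (integrable_const (Real.exp l)).mono' ((hYm.const_mul l).exp).aestronglyMeasurable
      (Filter.Eventually.of_forall fun ω => by
        rw [Real.norm_eq_abs, abs_of_pos (Real.exp_pos _), Real.exp_le_exp]
        have := hYb ω
        have := abs_le.1 (hYb ω)
        nlinarith)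
  have hrhsint : Integrable (fun ω => 1 + l * Y ω + Y ω ^ 2 * C) μ :=
    ((integrable_const 1).add (hYint.const_mul l)).add (hY2int.mul_const C)
  have h1 : mgf Y μ l ≤ ∫ ω, (1 + l * Y ω + Y ω ^ 2 * C) ∂μ := by
    rw [mgf]
    exact integral_mono hexpint hrhsint fun ω => exp_mul_le l (Y ω) hl (hYb ω)
  have hadd1 : Integrable (fun ω => 1 + l * Y ω) μ :=
    (integrable_const 1).add (hYint.const_mul l)
  have h2 : ∫ ω, (1 + l * Y ω + Y ω ^ 2 * C) ∂μ = 1 + (∫ ω, Y ω ^ 2 ∂μ) * C := by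
    rw [integral_add hadd1 (hY2int.mul_const C)]
    rw [integral_add (integrable_const 1) (hYint.const_mul l)]
    rw [integral_const, integral_const_mul, integral_mul_const, hmean]
    simp
  have h3 : 1 + (∫ ω, Y ω ^ 2 ∂μ) * C ≤ 1 + C / 2 := by nlinarith
  have h4 : 1 + C / 2 ≤ Real.exp (C / 2) := by
    have := Real.add_one_le_exp (C / 2); linarith
  calc mgf Y μ l ≤ 1 + (∫ ω, Y ω ^ 2 ∂μ) * C := h1.trans_eq h2
    _ ≤ Real.exp (C / 2) := h3.trans h4

lemma my_bernstein {Ω : Type*} [MeasurableSpace Ω] (μ : Measure Ω) [IsProbabilityMeasure μ]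
    {n : ℕ} (Y : Fin n → Ω → ℝ) (hmeas : ∀ t, Measurable (Y t))
    (hb : ∀ t ω, |Y t ω| ≤ 1)
    (hindep : iIndepFun Y μ)
    (hmean : ∀ t, ∫ ω, Y t ω ∂μ = 0) (hvar : ∀ t, ∫ ω, Y t ω ^ 2 ∂μ ≤ 1 / 2)
    {s : ℝ} (hs : 0 < s) :
    μ {ω | (n : ℝ) * s ≤ ∑ t, Y t ω} ≤
      ENNReal.ofReal (Real.exp (-((n : ℝ) * s ^ 2) / (2 * (1 / 2 + s / 3)))) := by
  set A : ℝ := 1 / 2 + s / 3 with hA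
  have hA0 : 0 < A := by positivity
  set l : ℝ := s / A with hl
  have hl0 : 0 < l := by positivity
  have hl3 : l < 3 := by
    rw [hl, div_lt_iff₀ hA0, hA]; linarith
  set X : Ω → ℝ := fun ω => ∑ t, Y t ω with hX
  have hXeq : (∑ t, Y t) = X := by
    funext ω; rw [Finset.sum_apply]
  have hXapp : ∀ ω, X ω = ∑ t, Y t ω := fun ω => rfl
  have hXm : Measurable X := Finset.measurable_sum _ fun t _ => hmeas t
  have hXb : ∀ ω, X ω ≤ n := fun ω => by
    rw [hXapp]
    calc ∑ t, Y t ω ≤ ∑ t : Fin n, (1:ℝ) :=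
        Finset.sum_le_sum fun t _ => (abs_le.1 (hb t ω)).2
      _ = n := by simp
  have hint : Integrable (fun ω => Real.exp (l * X ω)) μ :=
    (integrable_const (Real.exp (l * n))).mono'
      ((hXm.const_mul l).exp).aestronglyMeasurable
      (Filter.Eventually.of_forall fun ω => by
        rw [Real.norm_eq_abs, abs_of_pos (Real.exp_pos _), Real.exp_le_exp]
        exact mul_le_mul_of_nonneg_left (hXb ω) hl0.le)
  have hmgf : mgf X μ l ≤ Real.exp ((n : ℝ) * ((Real.exp l - l - 1) / 2)) := by
    rw [← hXeq, iIndepFun.mgf_sum hindep hmeas]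
    calc ∏ t : Fin n, mgf (Y t) μ l
        ≤ ∏ _t : Fin n, Real.exp ((Real.exp l - l - 1) / 2) :=
          Finset.prod_le_prod (fun t _ => mgf_nonneg)
            (fun t _ => my_mgf_le μ (hmeas t) (hb t) (hmean t) (hvar t) hl0.le)
      _ = Real.exp ((n : ℝ) * ((Real.exp l - l - 1) / 2)) := by
          rw [Finset.prod_const, ← Real.exp_nat_mul]; simp
  have hcher := measure_ge_le_exp_mul_mgf (μ := μ) (X := X) ((n : ℝ) * s) hl0.le hint
  have hbound : Real.exp (-l * ((n:ℝ) * s)) * mgf X μ l ≤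
      Real.exp (-((n : ℝ) * s ^ 2) / (2 * A)) := by
    calc Real.exp (-l * ((n:ℝ) * s)) * mgf X μ l
        ≤ Real.exp (-l * ((n:ℝ) * s)) * Real.exp ((n : ℝ) * ((Real.exp l - l - 1) / 2)) := by
          exact mul_le_mul_of_nonneg_left hmgf (Real.exp_pos _).le
      _ = Real.exp (-l * ((n:ℝ) * s) + (n : ℝ) * ((Real.exp l - l - 1) / 2)) :=
          (Real.exp_add _ _).symm
      _ ≤ Real.exp (-((n : ℝ) * s ^ 2) / (2 * A)) := by
          rw [Real.exp_le_exp]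
          have hq := exp_sub_le_quad hl0.le hl3
          have h13 : 1 - l / 3 = (1 / 2) / A := by
            rw [hl, hA]; field_simp; ring
          have hquad : Real.exp l - l - 1 ≤ s ^ 2 / A := by
            rw [h13] at hq
            calc Real.exp l - l - 1 ≤ l ^ 2 / (2 * (1 / 2 / A)) := hq
              _ = s ^ 2 / A := by rw [hl]; field_simp
          have hn0 : (0:ℝ) ≤ (n:ℝ) := Nat.cast_nonneg n
          have : (n : ℝ) * ((Real.exp l - l - 1) / 2) ≤ (n:ℝ) * (s ^ 2 / (2 * A)) := by
            apply mul_le_mul_of_nonneg_left _ hn0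
            have heq : s ^ 2 / A / 2 = s ^ 2 / (2 * A) := by rw [div_div, mul_comm]
            linarith [hquad, heq]
          have hls' : -l * ((n:ℝ) * s) = -((n:ℝ) * (s ^ 2 / A)) := by
            rw [hl]; ring
          calc -l * ((n:ℝ) * s) + (n : ℝ) * ((Real.exp l - l - 1) / 2)
              ≤ -((n:ℝ) * (s^2 / A)) + (n:ℝ) * (s ^ 2 / (2*A)) := by
                rw [hls']; linarith [this]
            _ = -((n : ℝ) * s ^ 2) / (2 * A) := by field_simp; ring
  have hEset : {ω | (n : ℝ) * s ≤ ∑ t, Y t ω} = {ω | (n : ℝ) * s ≤ X ω} := by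
    ext ω; simp [hXapp]
  rw [hEset]
  have hne : μ {ω | (n : ℝ) * s ≤ X ω} ≠ ⊤ := measure_ne_top _ _
  rw [← ENNReal.ofReal_toReal hne]
  exact ENNReal.ofReal_le_ofReal (hcher.trans hbound)

lemma fourier_int (m : Fin d → ℤ) (hm : m ≠ 0) :
    ∫ v, Complex.exp ((2 * π * ∑ i, (m i : ℝ) * v i : ℝ) * Complex.I) ∂(nu d) = 0 := by
  obtain ⟨i₀, hi₀⟩ : ∃ i, m i ≠ 0 := by
    by_contra h
    push_neg at h
    exact hm (funext h)
  have key : ∀ v : Fin d → ℝ,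
      (Set.Icc (0 : Fin d → ℝ) 1).indicator
        (fun v => Complex.exp ((2 * π * ∑ i, (m i : ℝ) * v i : ℝ) * Complex.I)) v =
      ∏ i, (Set.Icc (0:ℝ) 1).indicator
        (fun x => Complex.exp ((2 * π * (m i : ℝ) * x : ℝ) * Complex.I)) (v i) := by
    intro v
    by_cases hv : v ∈ Set.Icc (0 : Fin d → ℝ) 1
    · rw [Set.indicator_of_mem hv]
      have hvi : ∀ i, v i ∈ Set.Icc (0:ℝ) 1 := by
        intro i
        obtain ⟨h0, h1⟩ := hv
        exact ⟨h0 i, h1 i⟩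
      have : ∀ i, (Set.Icc (0:ℝ) 1).indicator
          (fun x => Complex.exp ((2 * π * (m i : ℝ) * x : ℝ) * Complex.I)) (v i) =
          Complex.exp ((2 * π * (m i : ℝ) * v i : ℝ) * Complex.I) := fun i =>
        Set.indicator_of_mem (hvi i) _
      rw [Finset.prod_congr rfl fun i _ => this i, ← Complex.exp_sum]
      congr 1
      rw [← Finset.sum_mul]
      congr 1
      push_cast
      rw [Finset.mul_sum]
      congr 1
      ext i
      ring
    · rw [Set.indicator_of_notMem hv]
      have : ∃ i, v i ∉ Set.Icc (0:ℝ) 1 := by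
        by_contra h
        push_neg at h
        exact hv ⟨fun i => (h i).1, fun i => (h i).2⟩
      obtain ⟨i, hi⟩ := this
      rw [eq_comm]
      exact Finset.prod_eq_zero (Finset.mem_univ i) (Set.indicator_of_notMem hi _)
  rw [nu, ← integral_indicator measurableSet_Icc]
  rw [show ((Set.Icc (0 : Fin d → ℝ) 1).indicator
        (fun v => Complex.exp ((2 * π * ∑ i, (m i : ℝ) * v i : ℝ) * Complex.I))) =
      fun v => ∏ i, (Set.Icc (0:ℝ) 1).indicator
        (fun x => Complex.exp ((2 * π * (m i : ℝ) * x : ℝ) * Complex.I)) (v i)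
    from funext key]
  rw [MeasureTheory.integral_fintype_prod_volume_eq_prod (𝕜 := ℂ)
    (f := fun i x => (Set.Icc (0:ℝ) 1).indicator
        (fun x => Complex.exp ((2 * π * (m i : ℝ) * x : ℝ) * Complex.I)) x)]
  apply Finset.prod_eq_zero (Finset.mem_univ i₀)
  rw [integral_indicator measurableSet_Icc]
  have hc : ((2 * π * (m i₀ : ℝ) : ℝ) : ℂ) * Complex.I ≠ 0 := by
    apply mul_ne_zero _ Complex.I_ne_zero
    rw [Complex.ofReal_ne_zero]
    exact mul_ne_zero (mul_ne_zero two_ne_zero Real.pi_ne_zero) (by exact_mod_cast hi₀)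
  have hfun : ∀ x : ℝ, ((2 * π * (m i₀ : ℝ) * x : ℝ) : ℂ) * Complex.I =
      (((2 * π * (m i₀ : ℝ) : ℝ) : ℂ) * Complex.I) * (x : ℂ) := by
    intro x; push_cast; ring
  calc ∫ x in Set.Icc (0:ℝ) 1, Complex.exp ((2 * π * (m i₀ : ℝ) * x : ℝ) * Complex.I)
      = ∫ x in Set.Icc (0:ℝ) 1,
          Complex.exp ((((2 * π * (m i₀ : ℝ) : ℝ) : ℂ) * Complex.I) * (x : ℂ)) := by
        congr 1; ext x; rw [hfun]
    _ = ∫ x in (0:ℝ)..1,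
          Complex.exp ((((2 * π * (m i₀ : ℝ) : ℝ) : ℂ) * Complex.I) * (x : ℂ)) := by
        rw [intervalIntegral.integral_of_le zero_le_one, integral_Icc_eq_integral_Ioc]
    _ = 0 := by
        rw [integral_exp_mul_complex hc]
        have h1 : (((2 * π * (m i₀ : ℝ) : ℝ) : ℂ) * Complex.I) * (1:ℝ) =
            (m i₀ : ℂ) * (2 * π * Complex.I) := by push_cast; ring
        have h0 : (((2 * π * (m i₀ : ℝ) : ℝ) : ℂ) * Complex.I) * ((0:ℝ):ℂ) = 0 := by
          push_cast; ring
        rw [h1, h0, Complex.exp_int_mul_two_pi_mul_I, Complex.exp_zero, sub_self, zero_div]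

def theta (m : Fin d → ℤ) (v : Fin d → ℝ) : ℝ := 2 * π * ∑ i, (m i : ℝ) * v i

lemma theta_continuous (m : Fin d → ℤ) : Continuous (theta m) :=
  continuous_const.mul (continuous_finset_sum _ fun i _ =>
    continuous_const.mul (continuous_apply i))

lemma integrable_of_bounded {f : (Fin d → ℝ) → ℝ} (hf : Measurable f)
    (hb : ∀ v, |f v| ≤ 1) : Integrable f (nu d) :=
  (integrable_const (1:ℝ)).mono' hf.aestronglyMeasurable
    (Filter.Eventually.of_forall fun v => by simpa using hb v)

lemma integral_cos_theta (m : Fin d → ℤ) (hm : m ≠ 0) :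
    ∫ v, Real.cos (theta m v) ∂(nu d) = 0 := by
  have hFm : Measurable fun v => Complex.exp ((theta m v : ℝ) * Complex.I) :=
    (Complex.measurable_exp).comp
      ((Complex.measurable_ofReal.comp (theta_continuous m).measurable).mul_const _)
  have hFi : Integrable (fun v => Complex.exp ((theta m v : ℝ) * Complex.I)) (nu d) :=
    (integrable_const (1:ℝ)).mono' hFm.aestronglyMeasurable
      (Filter.Eventually.of_forall fun v => by
        simp [Complex.norm_exp_ofReal_mul_I])
  have h1 : ∫ v, Real.cos (theta m v) ∂(nu d) =
      ∫ v, RCLike.re (Complex.exp ((theta m v : ℝ) * Complex.I)) ∂(nu d) := by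
    congr 1; ext v
    rw [RCLike.re_to_complex, Complex.exp_ofReal_mul_I_re]
  rw [h1, integral_re hFi]
  have := fourier_int m hm
  rw [show (∫ v, Complex.exp ((theta m v : ℝ) * Complex.I) ∂(nu d)) = 0 from this]
  simp

lemma integral_sin_theta (m : Fin d → ℤ) (hm : m ≠ 0) :
    ∫ v, Real.sin (theta m v) ∂(nu d) = 0 := by
  have hFm : Measurable fun v => Complex.exp ((theta m v : ℝ) * Complex.I) :=
    (Complex.measurable_exp).comp
      ((Complex.measurable_ofReal.comp (theta_continuous m).measurable).mul_const _)
  have hFi : Integrable (fun v => Complex.exp ((theta m v : ℝ) * Complex.I)) (nu d) :=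
    (integrable_const (1:ℝ)).mono' hFm.aestronglyMeasurable
      (Filter.Eventually.of_forall fun v => by
        simp [Complex.norm_exp_ofReal_mul_I])
  have h1 : ∫ v, Real.sin (theta m v) ∂(nu d) =
      ∫ v, RCLike.im (Complex.exp ((theta m v : ℝ) * Complex.I)) ∂(nu d) := by
    congr 1; ext v
    rw [RCLike.im_to_complex, Complex.exp_ofReal_mul_I_im]
  rw [h1, integral_im hFi]
  have := fourier_int m hm
  rw [show (∫ v, Complex.exp ((theta m v : ℝ) * Complex.I) ∂(nu d)) = 0 from this]
  simp

lemma two_theta (m : Fin d → ℤ) (v : Fin d → ℝ) :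
    2 * theta m v = theta (fun i => 2 * m i) v := by
  have h : ∑ i, ((2 * m i : ℤ) : ℝ) * v i = 2 * ∑ i, (m i : ℝ) * v i := by
    rw [Finset.mul_sum]
    exact Finset.sum_congr rfl fun i _ => by push_cast; ring
  unfold theta
  rw [h]
  ring

lemma two_m_ne_zero {m : Fin d → ℤ} (hm : m ≠ 0) : (fun i => 2 * m i) ≠ 0 := by
  intro h
  apply hm
  funext i
  have := congrFun h i
  simpa using this

lemma integral_cos_sq_theta (m : Fin d → ℤ) (hm : m ≠ 0) :
    ∫ v, Real.cos (theta m v) ^ 2 ∂(nu d) = 1 / 2 := by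
  have hrw : ∀ v, Real.cos (theta m v) ^ 2 =
      1 / 2 + Real.cos (theta (fun i => 2 * m i) v) / 2 := by
    intro v
    rw [Real.cos_sq, ← two_theta]
  have hci : Integrable (fun v => Real.cos (theta (fun i => 2 * m i) v)) (nu d) :=
    integrable_of_bounded (Real.continuous_cos.comp
      (theta_continuous _)).measurable fun v => Real.abs_cos_le_one _
  calc ∫ v, Real.cos (theta m v) ^ 2 ∂(nu d)
      = ∫ v, (1 / 2 + Real.cos (theta (fun i => 2 * m i) v) / 2) ∂(nu d) := by
        congr 1; ext v; exact hrw v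
    _ = 1 / 2 := by
        rw [integral_add (integrable_const _) (hci.div_const 2), integral_const,
          integral_div, integral_cos_theta _ (two_m_ne_zero hm)]
        simp

lemma integral_sin_sq_theta (m : Fin d → ℤ) (hm : m ≠ 0) :
    ∫ v, Real.sin (theta m v) ^ 2 ∂(nu d) = 1 / 2 := by
  have hrw : ∀ v, Real.sin (theta m v) ^ 2 =
      1 / 2 - Real.cos (theta (fun i => 2 * m i) v) / 2 := by
    intro v
    rw [Real.sin_sq, Real.cos_sq, ← two_theta]
    ring
  have hci : Integrable (fun v => Real.cos (theta (fun i => 2 * m i) v)) (nu d) :=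
    integrable_of_bounded (Real.continuous_cos.comp
      (theta_continuous _)).measurable fun v => Real.abs_cos_le_one _
  calc ∫ v, Real.sin (theta m v) ^ 2 ∂(nu d)
      = ∫ v, (1 / 2 - Real.cos (theta (fun i => 2 * m i) v) / 2) ∂(nu d) := by
        congr 1; ext v; exact hrw v
    _ = 1 / 2 := by
        rw [integral_sub (integrable_const _) (hci.div_const 2), integral_const,
          integral_div, integral_cos_theta _ (two_m_ne_zero hm)]
        simp

lemma integral_neg_cos_theta (m : Fin d → ℤ) (hm : m ≠ 0) :
    ∫ v, -Real.cos (theta m v) ∂(nu d) = 0 := by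
  rw [integral_neg, integral_cos_theta m hm, neg_zero]

lemma integral_neg_sin_theta (m : Fin d → ℤ) (hm : m ≠ 0) :
    ∫ v, -Real.sin (theta m v) ∂(nu d) = 0 := by
  rw [integral_neg, integral_sin_theta m hm, neg_zero]

lemma integral_neg_cos_sq_theta (m : Fin d → ℤ) (hm : m ≠ 0) :
    ∫ v, (-Real.cos (theta m v)) ^ 2 ∂(nu d) = 1 / 2 := by
  simp only [neg_sq]
  exact integral_cos_sq_theta m hm

lemma integral_neg_sin_sq_theta (m : Fin d → ℤ) (hm : m ≠ 0) :
    ∫ v, (-Real.sin (theta m v)) ^ 2 ∂(nu d) = 1 / 2 := by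
  simp only [neg_sq]
  exact integral_sin_sq_theta m hm


lemma quad_bound {D : ℕ} (a : Fin D → Fin D → ℝ) (u : Fin D → ℝ) (K : ℝ) (hK : 0 ≤ K)
    (ha : ∀ j l, 0 ≤ a j l) (hrow : ∀ j, ∑ l, a j l ≤ K) (hcol : ∀ l, ∑ j, a j l ≤ K) :
    ∑ j, (∑ l, a j l * u l) ^ 2 ≤ K ^ 2 * ∑ l, u l ^ 2 := by
  have hper : ∀ j, (∑ l, a j l * u l) ^ 2 ≤ K * ∑ l, a j l * u l ^ 2 := by
    intro j
    have hcs : (∑ l, a j l * u l) ^ 2 ≤ (∑ l, a j l) * ∑ l, a j l * u l ^ 2 := by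
      have hCS := Finset.sum_mul_sq_le_sq_mul_sq Finset.univ
        (fun l => Real.sqrt (a j l)) (fun l => Real.sqrt (a j l) * u l)
      have e1 : ∀ l, Real.sqrt (a j l) * (Real.sqrt (a j l) * u l) = a j l * u l := by
        intro l; rw [← mul_assoc, Real.mul_self_sqrt (ha j l)]
      have e2 : ∀ l, Real.sqrt (a j l) ^ 2 = a j l := fun l => Real.sq_sqrt (ha j l)
      have e3 : ∀ l, (Real.sqrt (a j l) * u l) ^ 2 = a j l * u l ^ 2 := by
        intro l; rw [mul_pow, Real.sq_sqrt (ha j l)]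
      rw [Finset.sum_congr rfl fun l _ => e1 l, Finset.sum_congr rfl fun l _ => e2 l,
        Finset.sum_congr rfl fun l _ => e3 l] at hCS
      exact hCS
    have hsum_nonneg : 0 ≤ ∑ l, a j l * u l ^ 2 :=
      Finset.sum_nonneg fun l _ => mul_nonneg (ha j l) (sq_nonneg _)
    exact hcs.trans (mul_le_mul_of_nonneg_right (hrow j) hsum_nonneg)
  calc ∑ j, (∑ l, a j l * u l) ^ 2 ≤ ∑ j, K * ∑ l, a j l * u l ^ 2 :=
      Finset.sum_le_sum fun j _ => hper j
    _ = K * ∑ l, (∑ j, a j l) * u l ^ 2 := by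
        rw [← Finset.mul_sum, Finset.sum_comm]
        congr 1
        exact Finset.sum_congr rfl fun l _ => (Finset.sum_mul _ _ _).symm
    _ ≤ K * ∑ l, K * u l ^ 2 := by
        apply mul_le_mul_of_nonneg_left _ hK
        exact Finset.sum_le_sum fun l _ =>
          mul_le_mul_of_nonneg_right (hcol l) (sq_nonneg _)
    _ = K ^ 2 * ∑ l, u l ^ 2 := by rw [← Finset.mul_sum]; ring

lemma row_sum_le {D : ℕ} (hD : 1 ≤ D) (c : ℝ) (b : Fin D → ℝ) (j : Fin D)
    (hbj : b j = 0) (hb : ∀ l, j ≠ l → b l ≤ c) : ∑ l, b l ≤ ((D:ℝ) - 1) * c := by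
  have h1 : ∑ l, b l = ∑ l ∈ Finset.univ.erase j, b l := by
    rw [← Finset.sum_erase_add _ _ (Finset.mem_univ j), hbj, add_zero]
  rw [h1]
  calc ∑ l ∈ Finset.univ.erase j, b l ≤ ∑ _l ∈ Finset.univ.erase j, c :=
      Finset.sum_le_sum fun l hl => hb l (Finset.ne_of_mem_erase hl).symm
    _ = ((Finset.univ.erase j).card : ℝ) * c := by rw [Finset.sum_const, nsmul_eq_mul]
    _ = ((D:ℝ) - 1) * c := by
        rw [Finset.card_erase_of_mem (Finset.mem_univ j)]
        simp only [Finset.card_univ, Fintype.card_fin]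
        congr 1
        rw [Nat.cast_sub hD]
        simp

set_option maxHeartbeats 1000000 in
lemma schur_bound {D : ℕ} (hD : 1 ≤ D) (A : Matrix (Fin D) (Fin D) ℂ) (c : ℝ) (hc : 0 ≤ c)
    (hdiag : ∀ j, A j j = 0) (hoff : ∀ j l : Fin D, j ≠ l → ‖A j l‖ ≤ c) :
    ‖A‖ ≤ ((D : ℝ) - 1) * c := by
  set K : ℝ := ((D : ℝ) - 1) * c with hK
  have hD1 : (0:ℝ) ≤ (D:ℝ) - 1 := by
    have : (1:ℝ) ≤ (D:ℝ) := by exact_mod_cast hD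
    linarith
  have hK0 : 0 ≤ K := mul_nonneg hD1 hc
  have hrow : ∀ j : Fin D, ∑ l, ‖A j l‖ ≤ K :=
    fun j => row_sum_le hD c (fun l => ‖A j l‖) j (by simp [hdiag j])
      (fun l hjl => hoff j l hjl)
  have hcol : ∀ l : Fin D, ∑ j, ‖A j l‖ ≤ K :=
    fun l => row_sum_le hD c (fun j => ‖A j l‖) l (by simp [hdiag l])
      (fun j hlj => hoff j l (Ne.symm hlj))
  rw [l2_opNorm_def]
  apply ContinuousLinearMap.opNorm_le_bound _ hK0
  intro x
  have happly : ∀ j, (LinearEquiv.trans (toEuclideanLin (𝕜 := ℂ) (m := Fin D) (n := Fin D))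
      LinearMap.toContinuousLinearMap A) x j = ∑ l, A j l * x l := by
    intro j
    simp [Matrix.toEuclideanLin_apply, Matrix.mulVec, dotProduct,
      LinearMap.coe_toContinuousLinearMap']
  rw [EuclideanSpace.norm_eq, EuclideanSpace.norm_eq]
  simp only [happly]
  have key := quad_bound (fun j l => ‖A j l‖) (fun l => ‖x l‖) K hK0
    (fun j l => norm_nonneg _) hrow hcol
  have hterm : ∀ j, ‖∑ l, A j l * x l‖ ^ 2 ≤ (∑ l, ‖A j l‖ * ‖x l‖) ^ 2 := by
    intro j
    apply pow_le_pow_left₀ (norm_nonneg _)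
    calc ‖∑ l, A j l * x l‖ ≤ ∑ l, ‖A j l * x l‖ :=
        norm_sum_le Finset.univ (fun l => A j l * x l)
      _ = ∑ l, ‖A j l‖ * ‖x l‖ := Finset.sum_congr rfl fun l _ => norm_mul _ _
  calc Real.sqrt (∑ j, ‖∑ l, A j l * x l‖ ^ 2)
      ≤ Real.sqrt (K ^ 2 * ∑ l, ‖x l‖ ^ 2) := by
        apply Real.sqrt_le_sqrt
        calc ∑ j, ‖∑ l, A j l * x l‖ ^ 2
            ≤ ∑ j, (∑ l, ‖A j l‖ * ‖x l‖) ^ 2 := Finset.sum_le_sum fun j _ => hterm j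
          _ ≤ K ^ 2 * ∑ l, ‖x l‖ ^ 2 := key
    _ = K * Real.sqrt (∑ l, ‖x l‖ ^ 2) := by
        rw [Real.sqrt_mul (sq_nonneg K), Real.sqrt_sq hK0]

end FourierAux
section MainProof
open Real MeasureTheory ProbabilityTheory Matrix
open scoped Matrix.Norms.L2Operator ENNReal NNReal

lemma event_bound {Ω : Type*} [MeasurableSpace Ω] (μ : Measure Ω) [IsProbabilityMeasure μ]
    {n d : ℕ} (x : Fin n → Ω → (Fin d → ℝ)) (hxm : ∀ t, Measurable (x t))
    (hindep : iIndepFun x μ)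
    (hunif : ∀ t, Measure.map (x t) μ = nu d)
    (g : (Fin d → ℝ) → ℝ) (hg : Measurable g) (hb : ∀ v, |g v| ≤ 1)
    (hmean : ∫ v, g v ∂(nu d) = 0) (hvar : ∫ v, g v ^ 2 ∂(nu d) ≤ 1 / 2)
    {s : ℝ} (hs : 0 < s) :
    μ {ω | (n : ℝ) * s ≤ ∑ t, g (x t ω)} ≤
      ENNReal.ofReal (Real.exp (-((n : ℝ) * s ^ 2) / (2 * (1 / 2 + s / 3)))) := by
  have htrans : ∀ (f : (Fin d → ℝ) → ℝ), Measurable f →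
      ∀ t, ∫ ω, f (x t ω) ∂μ = ∫ v, f v ∂(nu d) := by
    intro f hf t
    rw [← hunif t, integral_map (hxm t).aemeasurable hf.aestronglyMeasurable]
  exact my_bernstein μ (fun t ω => g (x t ω))
    (fun t => hg.comp (hxm t))
    (fun t ω => hb _)
    (hindep.comp (fun _ => g) (fun _ => hg))
    (fun t => by rw [htrans g hg t, hmean])
    (fun t => by
      have := htrans (fun v => g v ^ 2) (hg.pow_const 2) t
      rw [this]; exact hvar)
    hs

end MainProof
open scoped ENNReal in
set_option maxHeartbeats 1000000 in
/-- Deviation inequality for the random Fourier matrix (Corollary 3.2). -/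
theorem fourier_matrix_deviation
    {Ω : Type*} [MeasurableSpace Ω] (μ : Measure Ω) [IsProbabilityMeasure μ]
    {n d D : ℕ} (hn : 0 < n) (hD : 2 ≤ D)
    (x : Fin n → Ω → (Fin d → ℝ))
    (hmeas : ∀ t, Measurable (x t))
    (hindep : iIndepFun x μ)
    (hunif : ∀ t, Measure.map (x t) μ =
      (volume : Measure (Fin d → ℝ)).restrict (Set.Icc 0 1))
    (k : Fin D → (Fin d → ℤ)) (hk : Function.Injective k)
    (U : Ω → Matrix (Fin n) (Fin D) ℂ)
    (hU : ∀ ω t j, U ω t j =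
      Complex.exp (2 * π * Complex.I * ∑ i, (k j i : ℂ) * (x t ω i : ℂ)))
    (ε : ℝ) (hε : 0 < ε) :
    μ {ω | ε ≤ ‖(n : ℂ)⁻¹ • ((U ω)ᴴ * U ω) - 1‖} ≤
      ENNReal.ofReal (4 * D * (D - 1) *
        Real.exp (-(n * ε ^ 2) /
          (2 * (((D : ℝ) - 1) ^ 2 + Real.sqrt 2 * ((D : ℝ) - 1) * ε / 3)))) := by
  classical
  have hD1 : (1:ℕ) ≤ D := le_trans one_le_two hD
  have hDR : (2:ℝ) ≤ (D:ℝ) := by exact_mod_cast hD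
  set a : ℝ := (D:ℝ) - 1 with ha
  have ha0 : 0 < a := by rw [ha]; linarith
  set q : ℝ := Real.sqrt 2 with hqdef
  have hq : q ^ 2 = 2 := Real.sq_sqrt (by norm_num)
  have hq0 : 0 < q := Real.sqrt_pos.mpr (by norm_num)
  set s : ℝ := ε * q / (2 * a) with hsdef
  have hs : 0 < s := by positivity
  set δ : ℝ := ε / a with hddef
  have hδ : 0 < δ := by positivity
  have hs2 : s ^ 2 = ε ^ 2 / (2 * a ^ 2) := by
    rw [hsdef]
    rw [div_pow, mul_pow, hq, mul_pow]
    rw [div_eq_div_iff (by positivity) (by positivity)]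
    ring
  have h2s : 2 * s ^ 2 = δ ^ 2 := by
    rw [hs2, hddef, div_pow]
    rw [mul_div_assoc']
    rw [div_eq_div_iff (by positivity) (by positivity)]
    ring
  set mv : Fin D → Fin D → (Fin d → ℤ) := fun j l i => k l i - k j i with hmv
  have hmv0 : ∀ j l : Fin D, j ≠ l → mv j l ≠ 0 := by
    intro j l hjl h0
    have hkl : k l = k j := funext fun i => by
      have := congrFun h0 i
      simpa [hmv, sub_eq_zero] using this
    exact hjl (hk hkl).symm
  set M : Ω → Matrix (Fin D) (Fin D) ℂ := fun ω => (n:ℂ)⁻¹ • ((U ω)ᴴ * U ω) - 1 with hM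
  have hUform : ∀ ω t j, U ω t j =
      Complex.exp ((2 * π * ∑ i, (k j i : ℝ) * x t ω i : ℝ) * Complex.I) := by
    intro ω t j
    rw [hU]
    congr 1
    push_cast
    ring
  have hconj : ∀ b c : ℝ,
      star (Complex.exp ((b:ℝ) * Complex.I)) * Complex.exp ((c:ℝ) * Complex.I)
      = Complex.exp (((c - b : ℝ) : ℝ) * Complex.I) := by
    intro b c
    have h1 : star (Complex.exp ((b:ℝ) * Complex.I))
        = Complex.exp (-((b:ℝ)) * Complex.I) := by
      rw [show star (Complex.exp ((b:ℝ) * Complex.I))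
          = (starRingEnd ℂ) (Complex.exp ((b:ℝ) * Complex.I)) from rfl,
        ← Complex.exp_conj]
      congr 1
      simp [Complex.conj_ofReal]
    rw [h1, ← Complex.exp_add]
    congr 1
    push_cast
    ring
  have hentry : ∀ ω (j l : Fin D), ((U ω)ᴴ * U ω) j l
      = ∑ t, Complex.exp ((theta (mv j l) (x t ω) : ℝ) * Complex.I) := by
    intro ω j l
    rw [Matrix.mul_apply]
    apply Finset.sum_congr rfl
    intro t _
    rw [Matrix.conjTranspose_apply, hUform, hUform, hconj]
    congr 2
    have hsub : ∑ i, ((mv j l i : ℤ) : ℝ) * x t ω i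
        = (∑ i, (k l i : ℝ) * x t ω i) - ∑ i, (k j i : ℝ) * x t ω i := by
      rw [← Finset.sum_sub_distrib]
      apply Finset.sum_congr rfl
      intro i _
      simp only [hmv]
      push_cast
      ring
    unfold theta
    rw [hsub]
    ring
  have hn0 : ((n:ℂ)) ≠ 0 := Nat.cast_ne_zero.mpr hn.ne'
  have hnR : (0:ℝ) < (n:ℝ) := Nat.cast_pos.mpr hn
  have hMentry : ∀ ω (j l : Fin D), M ω j l
      = (n:ℂ)⁻¹ * (∑ t, Complex.exp ((theta (mv j l) (x t ω) : ℝ) * Complex.I))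
        - (1 : Matrix (Fin D) (Fin D) ℂ) j l := by
    intro ω j l
    rw [hM]
    simp only [Matrix.sub_apply, Matrix.smul_apply, smul_eq_mul, hentry]
  have hdiagM : ∀ ω (j : Fin D), M ω j j = 0 := by
    intro ω j
    rw [hMentry, Matrix.one_apply_eq]
    have hth : ∀ t, theta (mv j j) (x t ω) = 0 := by
      intro t
      unfold theta
      simp [hmv]
    have : ∀ t : Fin n, Complex.exp ((theta (mv j j) (x t ω) : ℝ) * Complex.I) = 1 := by
      intro t
      rw [hth]
      simp
    rw [Finset.sum_congr rfl fun t _ => this t]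
    rw [Finset.sum_const, Finset.card_univ, Fintype.card_fin, nsmul_eq_mul, mul_one]
    rw [inv_mul_cancel₀ hn0, sub_self]
  have hcast : Complex.ofReal ((n:ℝ)⁻¹) = (n:ℂ)⁻¹ := by push_cast; ring
  have hre : ∀ ω (j l : Fin D), j ≠ l → (M ω j l).re
      = (n:ℝ)⁻¹ * ∑ t, Real.cos (theta (mv j l) (x t ω)) := by
    intro ω j l hjl
    rw [hMentry, Matrix.one_apply_ne hjl, sub_zero, ← hcast, Complex.re_ofReal_mul,
      Complex.re_sum]
    congr 1
    exact Finset.sum_congr rfl fun t _ => Complex.exp_ofReal_mul_I_re _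
  have him : ∀ ω (j l : Fin D), j ≠ l → (M ω j l).im
      = (n:ℝ)⁻¹ * ∑ t, Real.sin (theta (mv j l) (x t ω)) := by
    intro ω j l hjl
    rw [hMentry, Matrix.one_apply_ne hjl, sub_zero, ← hcast, Complex.im_ofReal_mul,
      Complex.im_sum]
    congr 1
    exact Finset.sum_congr rfl fun t _ => Complex.exp_ofReal_mul_I_im _
  -- the four events
  set Ec : Fin D × Fin D → Set Ω := fun p =>
    {ω | (n:ℝ) * s ≤ ∑ t, Real.cos (theta (mv p.1 p.2) (x t ω))} with hEc
  set Ecn : Fin D × Fin D → Set Ω := fun p =>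
    {ω | (n:ℝ) * s ≤ ∑ t, -Real.cos (theta (mv p.1 p.2) (x t ω))} with hEcn
  set Es : Fin D × Fin D → Set Ω := fun p =>
    {ω | (n:ℝ) * s ≤ ∑ t, Real.sin (theta (mv p.1 p.2) (x t ω))} with hEs
  set Esn : Fin D × Fin D → Set Ω := fun p =>
    {ω | (n:ℝ) * s ≤ ∑ t, -Real.sin (theta (mv p.1 p.2) (x t ω))} with hEsn
  have hD0' : 0 < D := by omega
  have hD1' : 1 < D := by omega
  set j0 : Fin D := ⟨0, hD0'⟩ with hj0
  set j1 : Fin D := ⟨1, hD1'⟩ with hj1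
  have h01 : j0 ≠ j1 := by
    intro h
    have := congrArg Fin.val h
    simp [hj0, hj1] at this
  have hneo : (Finset.univ.offDiag : Finset (Fin D × Fin D)).Nonempty := by
    refine ⟨(j0, j1), ?_⟩
    rw [Finset.mem_offDiag]
    exact ⟨Finset.mem_univ _, Finset.mem_univ _, h01⟩
  -- inclusion
  have hincl : {ω | ε ≤ ‖M ω‖} ⊆
      ⋃ p ∈ (Finset.univ.offDiag : Finset (Fin D × Fin D)), (Ec p ∪ Ecn p ∪ Es p ∪ Esn p) := by
    intro ω hω
    simp only [Set.mem_setOf_eq] at hω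
    set c₀ := Finset.univ.offDiag.sup' hneo (fun p : Fin D × Fin D => ‖M ω p.1 p.2‖) with hc₀
    have hoffb : ∀ j l : Fin D, j ≠ l → ‖M ω j l‖ ≤ c₀ := fun j l hjl =>
      Finset.le_sup' (f := fun p : Fin D × Fin D => ‖M ω p.1 p.2‖) (b := (j, l))
        (Finset.mem_offDiag.mpr ⟨Finset.mem_univ _, Finset.mem_univ _, hjl⟩)
    have hc₀0 : 0 ≤ c₀ := le_trans (norm_nonneg _) (hoffb j0 j1 h01)
    have hnorm : ‖M ω‖ ≤ a * c₀ := by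
      rw [ha]
      exact schur_bound hD1 (M ω) c₀ hc₀0 (hdiagM ω) hoffb
    have hδc : δ ≤ c₀ := by
      rw [hddef, div_le_iff₀ ha0]
      calc ε ≤ ‖M ω‖ := hω
        _ ≤ a * c₀ := hnorm
        _ = c₀ * a := mul_comm _ _
    obtain ⟨p, hp, hpc⟩ := Finset.exists_mem_eq_sup' hneo
      (fun p : Fin D × Fin D => ‖M ω p.1 p.2‖)
    obtain ⟨-, -, hp12⟩ := Finset.mem_offDiag.mp hp
    have hz : δ ≤ ‖M ω p.1 p.2‖ := by
      rw [← hpc]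
      exact hδc
    have hsq : ‖M ω p.1 p.2‖ ^ 2 = (M ω p.1 p.2).re ^ 2 + (M ω p.1 p.2).im ^ 2 := by
      rw [Complex.sq_norm, Complex.normSq_apply]
      ring
    have hcase : s ≤ |(M ω p.1 p.2).re| ∨ s ≤ |(M ω p.1 p.2).im| := by
      by_contra hcon
      push_neg at hcon
      obtain ⟨h1, h2⟩ := hcon
      have e1 : (M ω p.1 p.2).re ^ 2 < s ^ 2 := by
        rw [← sq_abs]
        exact pow_lt_pow_left₀ h1 (abs_nonneg _) (by norm_num)
      have e2 : (M ω p.1 p.2).im ^ 2 < s ^ 2 := by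
        rw [← sq_abs]
        exact pow_lt_pow_left₀ h2 (abs_nonneg _) (by norm_num)
      nlinarith [hz, hδ, norm_nonneg (M ω p.1 p.2)]
    apply Set.mem_iUnion₂.mpr
    refine ⟨p, hp, ?_⟩
    have habsmul : ∀ T : ℝ, s ≤ (n:ℝ)⁻¹ * |T| → (n:ℝ) * s ≤ |T| := by
      intro T hT
      calc (n:ℝ) * s ≤ (n:ℝ) * ((n:ℝ)⁻¹ * |T|) := mul_le_mul_of_nonneg_left hT hnR.le
        _ = |T| := by field_simp
    rcases hcase with hRe | hIm
    · have hT : (n:ℝ) * s ≤ |∑ t, Real.cos (theta (mv p.1 p.2) (x t ω))| := by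
        apply habsmul
        rw [← abs_of_pos (inv_pos.mpr hnR), ← abs_mul, ← hre ω p.1 p.2 hp12]
        exact hRe
      rcases le_abs.mp hT with hpos | hneg
      · exact Set.mem_union_left _ (Set.mem_union_left _ (Set.mem_union_left _ hpos))
      · have : (n:ℝ) * s ≤ ∑ t, -Real.cos (theta (mv p.1 p.2) (x t ω)) := by
          rw [Finset.sum_neg_distrib]
          exact hneg
        exact Set.mem_union_left _ (Set.mem_union_left _ (Set.mem_union_right _ this))
    · have hT : (n:ℝ) * s ≤ |∑ t, Real.sin (theta (mv p.1 p.2) (x t ω))| := by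
        apply habsmul
        rw [← abs_of_pos (inv_pos.mpr hnR), ← abs_mul, ← him ω p.1 p.2 hp12]
        exact hIm
      rcases le_abs.mp hT with hpos | hneg
      · exact Set.mem_union_left _ (Set.mem_union_right _ hpos)
      · have : (n:ℝ) * s ≤ ∑ t, -Real.sin (theta (mv p.1 p.2) (x t ω)) := by
          rw [Finset.sum_neg_distrib]
          exact hneg
        exact Set.mem_union_right _ this
  -- probability bounds for each event
  set β : ℝ := Real.exp (-((n : ℝ) * s ^ 2) / (2 * (1 / 2 + s / 3))) with hβ
  have hβ0 : 0 ≤ β := (Real.exp_pos _).le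
  have hbEc : ∀ p : Fin D × Fin D, p ∈ (Finset.univ.offDiag : Finset (Fin D × Fin D)) →
      μ (Ec p) ≤ ENNReal.ofReal β := by
    intro p hp
    obtain ⟨-, -, hp12⟩ := Finset.mem_offDiag.mp hp
    exact event_bound μ x hmeas hindep hunif _
      (Real.continuous_cos.comp (theta_continuous (mv p.1 p.2))).measurable
      (fun v => Real.abs_cos_le_one _)
      (integral_cos_theta _ (hmv0 _ _ hp12))
      (le_of_eq (integral_cos_sq_theta _ (hmv0 _ _ hp12))) hs
  have hbEcn : ∀ p : Fin D × Fin D, p ∈ (Finset.univ.offDiag : Finset (Fin D × Fin D)) →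
      μ (Ecn p) ≤ ENNReal.ofReal β := by
    intro p hp
    obtain ⟨-, -, hp12⟩ := Finset.mem_offDiag.mp hp
    exact event_bound μ x hmeas hindep hunif
      (fun v => -Real.cos (theta (mv p.1 p.2) v))
      (Real.continuous_cos.comp (theta_continuous (mv p.1 p.2))).measurable.neg
      (fun v => by rw [abs_neg]; exact Real.abs_cos_le_one _)
      (integral_neg_cos_theta _ (hmv0 _ _ hp12))
      (le_of_eq (integral_neg_cos_sq_theta _ (hmv0 _ _ hp12))) hs
  have hbEs : ∀ p : Fin D × Fin D, p ∈ (Finset.univ.offDiag : Finset (Fin D × Fin D)) →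
      μ (Es p) ≤ ENNReal.ofReal β := by
    intro p hp
    obtain ⟨-, -, hp12⟩ := Finset.mem_offDiag.mp hp
    exact event_bound μ x hmeas hindep hunif _
      (Real.continuous_sin.comp (theta_continuous (mv p.1 p.2))).measurable
      (fun v => Real.abs_sin_le_one _)
      (integral_sin_theta _ (hmv0 _ _ hp12))
      (le_of_eq (integral_sin_sq_theta _ (hmv0 _ _ hp12))) hs
  have hbEsn : ∀ p : Fin D × Fin D, p ∈ (Finset.univ.offDiag : Finset (Fin D × Fin D)) →
      μ (Esn p) ≤ ENNReal.ofReal β := by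
    intro p hp
    obtain ⟨-, -, hp12⟩ := Finset.mem_offDiag.mp hp
    exact event_bound μ x hmeas hindep hunif
      (fun v => -Real.sin (theta (mv p.1 p.2) v))
      (Real.continuous_sin.comp (theta_continuous (mv p.1 p.2))).measurable.neg
      (fun v => by rw [abs_neg]; exact Real.abs_sin_le_one _)
      (integral_neg_sin_theta _ (hmv0 _ _ hp12))
      (le_of_eq (integral_neg_sin_sq_theta _ (hmv0 _ _ hp12))) hs
  have hsum4 : ∀ p : Fin D × Fin D, p ∈ (Finset.univ.offDiag : Finset (Fin D × Fin D)) →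
      μ (Ec p ∪ Ecn p ∪ Es p ∪ Esn p) ≤ ENNReal.ofReal (4 * β) := by
    intro p hp
    calc μ (Ec p ∪ Ecn p ∪ Es p ∪ Esn p)
        ≤ μ (Ec p ∪ Ecn p ∪ Es p) + μ (Esn p) := measure_union_le _ _
      _ ≤ (μ (Ec p ∪ Ecn p) + μ (Es p)) + μ (Esn p) := by
          gcongr
          exact measure_union_le _ _
      _ ≤ ((μ (Ec p) + μ (Ecn p)) + μ (Es p)) + μ (Esn p) := by
          gcongr
          exact measure_union_le _ _
      _ ≤ ((ENNReal.ofReal β + ENNReal.ofReal β) + ENNReal.ofReal β) + ENNReal.ofReal β := by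
          gcongr
          · exact hbEc p hp
          · exact hbEcn p hp
          · exact hbEs p hp
          · exact hbEsn p hp
      _ = ENNReal.ofReal (4 * β) := by
          rw [← ENNReal.ofReal_add hβ0 hβ0, ← ENNReal.ofReal_add (by positivity) hβ0,
            ← ENNReal.ofReal_add (by positivity) hβ0]
          congr 1
          ring
  have hcard : (Finset.univ.offDiag : Finset (Fin D × Fin D)).card = D * D - D := by
    rw [Finset.offDiag_card]
    simp [Finset.card_univ]
  have hexp : -((n : ℝ) * s ^ 2) / (2 * (1 / 2 + s / 3))
      = -((n:ℝ) * ε ^ 2) / (2 * (a ^ 2 + q * a * ε / 3)) := by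
    rw [hs2, hsdef]
    rw [div_eq_div_iff (by positivity) (by positivity)]
    field_simp
  calc μ {ω | ε ≤ ‖M ω‖}
      ≤ μ (⋃ p ∈ (Finset.univ.offDiag : Finset (Fin D × Fin D)),
          (Ec p ∪ Ecn p ∪ Es p ∪ Esn p)) := measure_mono hincl
    _ ≤ ∑ p ∈ (Finset.univ.offDiag : Finset (Fin D × Fin D)),
          μ (Ec p ∪ Ecn p ∪ Es p ∪ Esn p) := measure_biUnion_finset_le _ _
    _ ≤ ∑ _p ∈ (Finset.univ.offDiag : Finset (Fin D × Fin D)),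
          ENNReal.ofReal (4 * β) := Finset.sum_le_sum hsum4
    _ = ((D * D - D : ℕ) : ℝ≥0∞) * ENNReal.ofReal (4 * β) := by
        rw [Finset.sum_const, hcard, nsmul_eq_mul]
    _ = ENNReal.ofReal (((D * D - D : ℕ) : ℝ) * (4 * β)) := by
        rw [← ENNReal.ofReal_natCast (D * D - D), ← ENNReal.ofReal_mul (by positivity)]
    _ = ENNReal.ofReal (4 * D * (D - 1) *
          Real.exp (-((n:ℝ) * ε ^ 2) / (2 * (a ^ 2 + q * a * ε / 3)))) := by
        congr 1
        have hDD : D ≤ D * D := Nat.le_mul_of_pos_left D (by omega)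
        rw [hβ, hexp, Nat.cast_sub hDD]
        push_cast
        rw [ha]
        ring
end

section
/- Define F_m(z) = ∑_{k=1}^{⌊m/2⌋} S₂(m,k) z^k where S₂(m,k) are the associated Stirling numbers of the second kind (counting partitions of an m-set into k blocks each of size ≥ 2), and G_m(z) = z^{−m} F_m(z). For all real κ > 0 and integers m ≥ 1 with 3m/κ < 1, G_{2m}(κ) ≤ (3m/κ)^m (1 − (3m/κ)^m)/(1 − 3m/κ). -/
/-- Associated Stirling numbers of the second kind: `assocStirling m k` counts
partitions of an `m`-element set into exactly `k` blocks, each of size at least 2. -/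
def assocStirling : ℕ → ℕ → ℕ
  | 0, 0 => 1
  | 0, _ + 1 => 0
  | 1, _ => 0
  | _ + 2, 0 => 0
  | n + 2, k + 1 => (k + 1) * assocStirling (n + 1) (k + 1) + (n + 1) * assocStirling n k

/-- `F_m(z) = ∑_{k=1}^{⌊m/2⌋} S₂(m,k) z^k`. -/
noncomputable def Fpoly (m : ℕ) (z : ℝ) : ℝ :=
  ∑ k ∈ Finset.Icc 1 (m / 2), (assocStirling m k : ℝ) * z ^ k

/-- `G_m(z) = z^{-m} F_m(z)`. -/
noncomputable def Gpoly (m : ℕ) (z : ℝ) : ℝ := z ^ (-(m : ℤ)) * Fpoly m z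

lemma assocStirling_eq_zero (n : ℕ) : ∀ k, n < 2 * k → assocStirling n k = 0 := by
  induction n using Nat.strong_induction_on with
  | _ n ih =>
    match n with
    | 0 =>
      intro k hk
      match k with
      | k + 1 => rfl
    | 1 =>
      intro k hk
      match k with
      | 0 => omega
      | k + 1 => rfl
    | n + 2 =>
      intro k hk
      match k with
      | 0 => omega
      | k + 1 =>
        show (k + 1) * assocStirling (n + 1) (k + 1) + (n + 1) * assocStirling n k = 0
        rw [ih (n + 1) (by omega) (k + 1) (by omega), ih n (by omega) k (by omega)]
        ring

lemma assocStirling_le (n : ℕ) :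
    ∀ k, 2 * k ≤ n → 2 ^ (n - k) * assocStirling n k ≤ (3 * n) ^ (n - k) := by
  induction n using Nat.strong_induction_on with
  | _ n ih =>
    intro k hk
    match n, k with
    | 0, 0 => simp [assocStirling]
    | 1, 0 => simp [assocStirling]
    | n + 2, 0 => simp [assocStirling]
    | n + 2, k + 1 =>
      have hk' : 2 * k ≤ n := by omega
      have he : n + 2 - (k + 1) = (n - k) + 1 := by omega
      set e := n - k with hedef
      have h1 : (k + 1) * assocStirling (n + 1) (k + 1) * 2 ^ (e + 1)
          ≤ (n + 1) * (3 * (n + 1)) ^ e := by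
        by_cases h : 2 * (k + 1) ≤ n + 1
        · have := ih (n + 1) (by omega) (k + 1) h
          have he2 : n + 1 - (k + 1) = e := by omega
          rw [he2] at this
          calc (k + 1) * assocStirling (n + 1) (k + 1) * 2 ^ (e + 1)
              = (2 * (k + 1)) * (2 ^ e * assocStirling (n + 1) (k + 1)) := by ring
            _ ≤ (n + 1) * (3 * (n + 1)) ^ e := by
                exact Nat.mul_le_mul h this
        · rw [assocStirling_eq_zero (n + 1) (k + 1) (by omega)]
          simp
      have h2 : (n + 1) * assocStirling n k * 2 ^ (e + 1)
          ≤ 2 * (n + 1) * (3 * n) ^ e := by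
        have := ih n (by omega) k hk'
        calc (n + 1) * assocStirling n k * 2 ^ (e + 1)
            = (2 * (n + 1)) * (2 ^ e * assocStirling n k) := by ring
          _ ≤ 2 * (n + 1) * (3 * n) ^ e := Nat.mul_le_mul_left _ this
      show 2 ^ (n + 2 - (k + 1)) *
          ((k + 1) * assocStirling (n + 1) (k + 1) + (n + 1) * assocStirling n k)
          ≤ (3 * (n + 2)) ^ (n + 2 - (k + 1))
      rw [he]
      have hpow1 : (3 * n) ^ e ≤ (3 * (n + 1)) ^ e := Nat.pow_le_pow_left (by omega) e
      have hpow2 : (3 * (n + 1)) ^ e ≤ (3 * (n + 2)) ^ e := Nat.pow_le_pow_left (by omega) e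
      calc 2 ^ (e + 1) *
            ((k + 1) * assocStirling (n + 1) (k + 1) + (n + 1) * assocStirling n k)
          = (k + 1) * assocStirling (n + 1) (k + 1) * 2 ^ (e + 1)
            + (n + 1) * assocStirling n k * 2 ^ (e + 1) := by ring
        _ ≤ (n + 1) * (3 * (n + 1)) ^ e + 2 * (n + 1) * (3 * n) ^ e :=
            Nat.add_le_add h1 h2
        _ ≤ (n + 1) * (3 * (n + 1)) ^ e + 2 * (n + 1) * (3 * (n + 1)) ^ e :=
            Nat.add_le_add_left (Nat.mul_le_mul_left _ hpow1) _
        _ = 3 * (n + 1) * (3 * (n + 1)) ^ e := by ring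
        _ ≤ 3 * (n + 2) * (3 * (n + 2)) ^ e :=
            Nat.mul_le_mul (by omega) hpow2
        _ = (3 * (n + 2)) ^ (e + 1) := by ring

lemma assocStirling_le' (m k : ℕ) (hk : k ≤ m) :
    assocStirling (2 * m) k ≤ (3 * m) ^ (2 * m - k) := by
  have h := assocStirling_le (2 * m) k (by omega)
  have h6 : (3 * (2 * m)) ^ (2 * m - k) = 2 ^ (2 * m - k) * (3 * m) ^ (2 * m - k) := by
    rw [← Nat.mul_pow]; ring_nf
  rw [h6] at h
  exact Nat.le_of_mul_le_mul_left h (Nat.pow_pos (by norm_num))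

theorem Gpoly_bound (κ : ℝ) (hκ : 0 < κ) (m : ℕ) (hm : 1 ≤ m)
    (h3m : 3 * m / κ < 1) :
    Gpoly (2 * m) κ ≤
      (3 * m / κ) ^ m * (1 - (3 * m / κ) ^ m) / (1 - 3 * m / κ) := by
  have hκ0 : κ ≠ 0 := ne_of_gt hκ
  set x : ℝ := 3 * m / κ with hxdef
  have hx0 : 0 < x := by
    apply div_pos _ hκ
    have : (1 : ℝ) ≤ (m : ℝ) := by exact_mod_cast hm
    linarith
  have hx1 : x ≠ 1 := ne_of_lt h3m
  have h1x : (1 : ℝ) - x ≠ 0 := by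
    intro h; apply hx1; linarith
  -- Step 1: rewrite Gpoly as a sum
  have hdiv : 2 * m / 2 = m := by omega
  have hG : Gpoly (2 * m) κ =
      ∑ k ∈ Finset.Icc 1 m, (assocStirling (2 * m) k : ℝ) * (κ ^ (-((2 * m : ℕ) : ℤ)) * κ ^ k) := by
    rw [Gpoly, Fpoly, hdiv, Finset.mul_sum]
    apply Finset.sum_congr rfl
    intro k hk
    ring
  rw [hG]
  -- Step 2: bound each term by x ^ (2m - k)
  have hstep : ∀ k ∈ Finset.Icc 1 m,
      (assocStirling (2 * m) k : ℝ) * (κ ^ (-((2 * m : ℕ) : ℤ)) * κ ^ k)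
        ≤ x ^ (2 * m - k) := by
    intro k hk
    rw [Finset.mem_Icc] at hk
    have hk2m : k ≤ 2 * m := by omega
    have hzpow : κ ^ (-((2 * m : ℕ) : ℤ)) * κ ^ k = (κ⁻¹) ^ (2 * m - k) := by
      have h1 : (κ⁻¹) ^ (2 * m - k) = κ ^ (-(((2 * m - k : ℕ)) : ℤ)) := by
        rw [zpow_neg, zpow_natCast, inv_pow]
      rw [h1, ← zpow_natCast κ k, ← zpow_add₀ hκ0]
      congr 1
      omega
    rw [hzpow]
    have hbound : (assocStirling (2 * m) k : ℝ) ≤ (3 * (m : ℝ)) ^ (2 * m - k) := by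
      have := assocStirling_le' m k (by omega)
      calc (assocStirling (2 * m) k : ℝ) ≤ (((3 * m) ^ (2 * m - k) : ℕ) : ℝ) := by
            exact_mod_cast this
        _ = (3 * (m : ℝ)) ^ (2 * m - k) := by push_cast; ring
    have hxpow : x ^ (2 * m - k) = (3 * (m : ℝ)) ^ (2 * m - k) * (κ⁻¹) ^ (2 * m - k) := by
      rw [hxdef, div_eq_mul_inv, mul_pow]
    rw [hxpow]
    apply mul_le_mul_of_nonneg_right hbound
    positivity
  refine le_trans (Finset.sum_le_sum hstep) ?_
  -- Step 3: the geometric sum equals the RHS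
  have h3 : ∑ k ∈ Finset.Icc 1 m, x ^ (2 * m - k) = ∑ i ∈ Finset.range m, x ^ (m + i) := by
    rw [show Finset.Icc 1 m = Finset.Ico 1 (m + 1) by rw [Finset.Ico_add_one_right_eq_Icc],
      Finset.sum_Ico_eq_sum_range]
    simp only [Nat.add_sub_cancel]
    rw [← Finset.sum_range_reflect (fun i => x ^ (m + i)) m]
    apply Finset.sum_congr rfl
    intro i hi
    rw [Finset.mem_range] at hi
    congr 1
    omega
  rw [h3]
  have h4 : ∑ i ∈ Finset.range m, x ^ (m + i) = x ^ m * ∑ i ∈ Finset.range m, x ^ i := by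
    rw [Finset.mul_sum]
    apply Finset.sum_congr rfl
    intro i hi
    rw [pow_add]
  rw [h4, geom_sum_eq hx1]
  have h5 : (x ^ m - 1) / (x - 1) = (1 - x ^ m) / (1 - x) := by
    rw [← neg_div_neg_eq]
    ring_nf
  rw [h5, mul_div_assoc]
end
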